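/- For every c-formula ψ containing exactly m occurrences of unreliable connectives and every valuation v : X → {⊥,⊤}, the polynomial P^v_ψ ∈ ℝ[ν] has degree at most m and all its coefficients are integers of absolute value at most 4^m. -/
import Mathlib


namespace UCL

/-- The mode of a connective occurrence: the ideal (reliable) connective `c`,
its negated-output counterpart `c̄`, or its unreliable counterpart `c̃`. -/
inductive Mode where
  | ideal | negated | unreliable
deriving DecidableEq

/-- The binary connectives of the signature. -/
inductive BinConn where
  | and | or | imp | iff
deriving DecidableEq

/-- Formulas over the UCL signature `Σfc` and the set `X` of propositional
variables: constants, variables, negation family, binary connective families,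
and the `(3+2k)`-ary majority families (each in one of the three modes). -/
inductive Form (X : Type) where
  | verum : Form X
  | falsum : Form X
  | var : X → Form X
  | not : Mode → Form X → Form X
  | bin : BinConn → Mode → Form X → Form X → Form X
  | maj : (k : ℕ) → Mode → (Fin (3 + 2 * k) → Form X) → Form X

variable {X : Type}

/-- Output of a connective occurrence: negated-output counterparts negate. -/
def applyMode (m : Mode) (b : Bool) : Bool := if m = .negated then !b else b

def binSem : BinConn → Bool → Bool → Bool
  | .and, a, b => a && b
  | .or, a, b => a || b
  | .imp, a, b => !a || b
  | .iff, a, b => a == b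

/-- Classical satisfaction of a formula by a valuation (meaningful for PL
formulas; unreliable connectives are evaluated like their ideal versions). -/
def Form.eval (v : X → Bool) : Form X → Bool
  | .verum => true
  | .falsum => false
  | .var x => v x
  | .not m φ => applyMode m (!(φ.eval v))
  | .bin c m φ ψ => applyMode m (binSem c (φ.eval v) (ψ.eval v))
  | .maj k m f => applyMode m (decide (3 + 2 * k < 2 * ∑ i, ((f i).eval v).toNat))

/-- A PL formula: contains no unreliable connectives. -/
def Form.IsPL : Form X → Prop
  | .verum => True
  | .falsum => True
  | .var _ => True
  | .not m φ => m ≠ .unreliable ∧ φ.IsPL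
  | .bin _ m φ ψ => m ≠ .unreliable ∧ φ.IsPL ∧ ψ.IsPL
  | .maj _ m f => m ≠ .unreliable ∧ ∀ i, (f i).IsPL

/-- The outcome relation `φ ⊳ ψ` between PL formulas `φ` and c-formulas `ψ`. -/
inductive Outcome : Form X → Form X → Prop where
  | refl (φ : Form X) : φ.IsPL → Outcome φ φ
  | notC {m : Mode} {φ ψ : Form X} (hm : m ≠ .unreliable) :
      Outcome φ ψ → Outcome (.not m φ) (.not m ψ)
  | binC {c : BinConn} {m : Mode} {φ₁ φ₂ ψ₁ ψ₂ : Form X} (hm : m ≠ .unreliable) :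
      Outcome φ₁ ψ₁ → Outcome φ₂ ψ₂ → Outcome (.bin c m φ₁ φ₂) (.bin c m ψ₁ ψ₂)
  | majC {k : ℕ} {m : Mode} {f g : Fin (3 + 2 * k) → Form X} (hm : m ≠ .unreliable) :
      (∀ i, Outcome (f i) (g i)) → Outcome (.maj k m f) (.maj k m g)
  | notOk {φ ψ : Form X} : Outcome φ ψ → Outcome (.not .ideal φ) (.not .unreliable ψ)
  | notFail {φ ψ : Form X} : Outcome φ ψ → Outcome (.not .negated φ) (.not .unreliable ψ)
  | binOk {c : BinConn} {φ₁ φ₂ ψ₁ ψ₂ : Form X} :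
      Outcome φ₁ ψ₁ → Outcome φ₂ ψ₂ →
      Outcome (.bin c .ideal φ₁ φ₂) (.bin c .unreliable ψ₁ ψ₂)
  | binFail {c : BinConn} {φ₁ φ₂ ψ₁ ψ₂ : Form X} :
      Outcome φ₁ ψ₁ → Outcome φ₂ ψ₂ →
      Outcome (.bin c .negated φ₁ φ₂) (.bin c .unreliable ψ₁ ψ₂)
  | majOk {k : ℕ} {f g : Fin (3 + 2 * k) → Form X} :
      (∀ i, Outcome (f i) (g i)) → Outcome (.maj k .ideal f) (.maj k .unreliable g)
  | majFail {k : ℕ} {f g : Fin (3 + 2 * k) → Form X} :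
      (∀ i, Outcome (f i) (g i)) → Outcome (.maj k .negated f) (.maj k .unreliable g)

/-- The probability factor contributed by one connective occurrence:
the circuit connective has mode `m`, the outcome one mode `m'`. -/
noncomputable def modeFactor (m m' : Mode) : Polynomial ℝ :=
  match m, m' with
  | .unreliable, .ideal => Polynomial.X
  | .unreliable, .negated => 1 - Polynomial.X
  | .ideal, .ideal => 1
  | .negated, .negated => 1
  | _, _ => 0

/-- `Pν[ψ ▷ φ]`, written `prob ψ φ`: the probability polynomial of outcome `φ`
of the c-formula `ψ` (junk value `0` when `φ` is not an outcome of `ψ`). -/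
noncomputable def Form.prob [DecidableEq X] (ψ φ : Form X) : Polynomial ℝ :=
  match ψ, φ with
  | .verum, .verum => 1
  | .falsum, .falsum => 1
  | .var x, .var y => if x = y then 1 else 0
  | .not m ψ, .not m' φ => modeFactor m m' * ψ.prob φ
  | .bin c m ψ₁ ψ₂, .bin c' m' φ₁ φ₂ =>
      if c = c' then modeFactor m m' * (ψ₁.prob φ₁ * ψ₂.prob φ₂) else 0
  | .maj k m g, .maj k' m' f =>
      if h : k = k' then
        modeFactor m m' * ∏ i : Fin (3 + 2 * k), (g i).prob (f (Fin.cast (by omega) i))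
      else 0
  | _, _ => 0
termination_by structural ψ

/-- Number of occurrences of unreliable connectives in a formula. -/
def Form.unrelCount : Form X → ℕ
  | .verum => 0
  | .falsum => 0
  | .var _ => 0
  | .not m φ => (if m = .unreliable then 1 else 0) + φ.unrelCount
  | .bin _ m φ ψ => (if m = .unreliable then 1 else 0) + φ.unrelCount + ψ.unrelCount
  | .maj _ m f => (if m = .unreliable then 1 else 0) + ∑ i, (f i).unrelCount

/-- Number of occurrences of unreliable connectives of the c-formula `ψ` that
are replaced by their ideal counterparts in the outcome `φ` (junk value when
`φ` is not an outcome of `ψ`). -/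
def Form.idealRepl (ψ φ : Form X) : ℕ :=
  match ψ, φ with
  | .not m ψ, .not m' φ =>
      (if m = .unreliable ∧ m' = .ideal then 1 else 0) + ψ.idealRepl φ
  | .bin _ m ψ₁ ψ₂, .bin _ m' φ₁ φ₂ =>
      (if m = .unreliable ∧ m' = .ideal then 1 else 0) + ψ₁.idealRepl φ₁ + ψ₂.idealRepl φ₂
  | .maj k m g, .maj k' m' f =>
      (if m = .unreliable ∧ m' = .ideal then 1 else 0) +
        (if h : k = k' then ∑ i : Fin (3 + 2 * k), (g i).idealRepl (f (Fin.cast (by omega) i))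
         else 0)
  | _, _ => 0
termination_by structural ψ

/-- `P^v_ψ(ν)`: the aggregated probability, at reliability rate `ν`, of the
outcomes of `ψ` satisfied by the valuation `v`. -/
noncomputable def Pval [DecidableEq X] (v : X → Bool) (ψ : Form X) (ν : ℝ) : ℝ :=
  ∑ᶠ φ ∈ {φ : Form X | Outcome φ ψ ∧ φ.eval v = true}, (ψ.prob φ).eval ν

/-- `P^v_ψ` as a polynomial in `ℝ[ν]`. -/
noncomputable def Ppoly [DecidableEq X] (v : X → Bool) (ψ : Form X) : Polynomial ℝ :=
  ∑ᶠ φ ∈ {φ : Form X | Outcome φ ψ ∧ φ.eval v = true}, ψ.prob φ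

/-- An interpretation `I = (v, ρ)` of UCL. -/
structure Interp (X : Type) where
  v : X → Bool
  nu : ℝ
  mu : ℝ
  nu_gt : 1 / 2 < nu
  nu_le : nu ≤ 1
  mu_gt : 1 / 2 < mu
  mu_le : mu ≤ 1

/-- Satisfaction of a c-formula by an interpretation. -/
def satC [DecidableEq X] (I : Interp X) (ψ : Form X) : Prop :=
  I.mu ≤ Pval I.v ψ I.nu

/-- Satisfaction of the a-formula `μ ≤ P` (with `P` a polynomial in `ν` with
integer coefficients) by an interpretation. -/
def satA (I : Interp X) (P : Polynomial ℤ) : Prop :=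
  I.mu ≤ (P.map (Int.castRingHom ℝ)).eval I.nu

/-- `Γ ⊨_UCL ψ` for a finite set `Γ` of a-formulas and a c-formula `ψ`. -/
def entails [DecidableEq X] (Γ : List (Polynomial ℤ)) (ψ : Form X) : Prop :=
  ∀ I : Interp X, (∀ P ∈ Γ, satA I P) → satC I ψ

/-- UCL-satisfiability of a c-formula. -/
def UCLSat [DecidableEq X] (ψ : Form X) : Prop :=
  ∃ I : Interp X, satC I ψ

end UCL

namespace UCLAux

open UCL Polynomial

attribute [local instance 0] Classical.decEq

variable {α : Type} [DecidableEq α]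

/-- The possible modes in an outcome for a connective of mode `m`. -/
def modesF : Mode → Finset Mode
  | .unreliable => {.ideal, .negated}
  | m => {m}

lemma card_modesF (m : Mode) :
    (modesF m).card ≤ 2 ^ (if m = Mode.unreliable then 1 else 0) := by
  cases m <;> simp [modesF]

lemma self_mem_modesF {m : Mode} (hm : m ≠ .unreliable) : m ∈ modesF m := by
  cases m <;> simp_all [modesF]

lemma ideal_mem_modesF : Mode.ideal ∈ modesF .unreliable := by simp [modesF]

lemma negated_mem_modesF : Mode.negated ∈ modesF .unreliable := by simp [modesF]

/-- A finite superset of the outcomes of a c-formula. -/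
noncomputable def outSet : Form α → Finset (Form α)
  | .verum => {.verum}
  | .falsum => {.falsum}
  | .var x => {.var x}
  | .not m φ => ((modesF m) ×ˢ outSet φ).image fun p => .not p.1 p.2
  | .bin c m φ ψ =>
      ((modesF m) ×ˢ (outSet φ ×ˢ outSet ψ)).image fun p => .bin c p.1 p.2.1 p.2.2
  | .maj k m f =>
      ((modesF m) ×ˢ Fintype.piFinset fun i => outSet (f i)).image fun p => .maj k p.1 p.2

lemma card_outSet (ψ : Form α) : (outSet ψ).card ≤ 2 ^ ψ.unrelCount := by
  induction ψ with
  | verum => simp [outSet, Form.unrelCount]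
  | falsum => simp [outSet, Form.unrelCount]
  | var x => simp [outSet, Form.unrelCount]
  | not m φ ih =>
    calc (outSet (.not m φ)).card ≤ ((modesF m) ×ˢ outSet φ).card :=
          Finset.card_image_le
      _ = (modesF m).card * (outSet φ).card := Finset.card_product _ _
      _ ≤ 2 ^ (if m = Mode.unreliable then 1 else 0) * 2 ^ φ.unrelCount :=
          Nat.mul_le_mul (card_modesF m) ih
      _ = 2 ^ (Form.not m φ).unrelCount := by
          rw [← pow_add]; simp [Form.unrelCount]
  | bin c m φ ψ ih1 ih2 =>
    calc (outSet (.bin c m φ ψ)).card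
        ≤ ((modesF m) ×ˢ (outSet φ ×ˢ outSet ψ)).card := Finset.card_image_le
      _ = (modesF m).card * ((outSet φ).card * (outSet ψ).card) := by
          rw [Finset.card_product, Finset.card_product]
      _ ≤ 2 ^ (if m = Mode.unreliable then 1 else 0) *
            (2 ^ φ.unrelCount * 2 ^ ψ.unrelCount) :=
          Nat.mul_le_mul (card_modesF m) (Nat.mul_le_mul ih1 ih2)
      _ = 2 ^ (Form.bin c m φ ψ).unrelCount := by
          rw [← pow_add, ← pow_add]; simp [Form.unrelCount, add_assoc]
  | maj k m f ih =>
    calc (outSet (.maj k m f)).card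
        ≤ ((modesF m) ×ˢ Fintype.piFinset fun i => outSet (f i)).card :=
          Finset.card_image_le
      _ = (modesF m).card * ∏ i, (outSet (f i)).card := by
          rw [Finset.card_product, Fintype.card_piFinset]
      _ ≤ 2 ^ (if m = Mode.unreliable then 1 else 0) * ∏ i, 2 ^ (f i).unrelCount :=
          Nat.mul_le_mul (card_modesF m) (Finset.prod_le_prod' fun i _ => ih i)
      _ = 2 ^ (Form.maj k m f).unrelCount := by
          rw [Finset.prod_pow_eq_pow_sum, ← pow_add]; simp [Form.unrelCount]

lemma self_mem_outSet {φ : Form α} (h : φ.IsPL) : φ ∈ outSet φ := by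
  induction φ with
  | verum => simp [outSet]
  | falsum => simp [outSet]
  | var x => simp [outSet]
  | not m φ ih =>
    obtain ⟨hm, hφ⟩ := h
    simp only [outSet, Finset.mem_image]
    exact ⟨(m, φ), Finset.mem_product.2 ⟨self_mem_modesF hm, ih hφ⟩, rfl⟩
  | bin c m φ ψ ih1 ih2 =>
    obtain ⟨hm, h1, h2⟩ := h
    simp only [outSet, Finset.mem_image]
    exact ⟨(m, φ, ψ), Finset.mem_product.2 ⟨self_mem_modesF hm,
      Finset.mem_product.2 ⟨ih1 h1, ih2 h2⟩⟩, rfl⟩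
  | maj k m f ih =>
    obtain ⟨hm, hf⟩ := h
    simp only [outSet, Finset.mem_image]
    exact ⟨(m, f), Finset.mem_product.2 ⟨self_mem_modesF hm,
      Fintype.mem_piFinset.2 fun i => ih i (hf i)⟩, rfl⟩

lemma mem_outSet_of_outcome {φ ψ : Form α} (h : Outcome φ ψ) : φ ∈ outSet ψ := by
  induction h with
  | refl φ hpl => exact self_mem_outSet hpl
  | notC hm _ ih =>
    simp only [outSet, Finset.mem_image]
    exact ⟨(_, _), Finset.mem_product.2 ⟨self_mem_modesF hm, ih⟩, rfl⟩
  | binC hm _ _ ih1 ih2 =>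
    simp only [outSet, Finset.mem_image]
    exact ⟨(_, _, _), Finset.mem_product.2 ⟨self_mem_modesF hm,
      Finset.mem_product.2 ⟨ih1, ih2⟩⟩, rfl⟩
  | majC hm _ ih =>
    simp only [outSet, Finset.mem_image]
    exact ⟨(_, _), Finset.mem_product.2 ⟨self_mem_modesF hm,
      Fintype.mem_piFinset.2 ih⟩, rfl⟩
  | notOk _ ih =>
    simp only [outSet, Finset.mem_image]
    exact ⟨(_, _), Finset.mem_product.2 ⟨ideal_mem_modesF, ih⟩, rfl⟩
  | notFail _ ih =>
    simp only [outSet, Finset.mem_image]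
    exact ⟨(_, _), Finset.mem_product.2 ⟨negated_mem_modesF, ih⟩, rfl⟩
  | binOk _ _ ih1 ih2 =>
    simp only [outSet, Finset.mem_image]
    exact ⟨(_, _, _), Finset.mem_product.2 ⟨ideal_mem_modesF,
      Finset.mem_product.2 ⟨ih1, ih2⟩⟩, rfl⟩
  | binFail _ _ ih1 ih2 =>
    simp only [outSet, Finset.mem_image]
    exact ⟨(_, _, _), Finset.mem_product.2 ⟨negated_mem_modesF,
      Finset.mem_product.2 ⟨ih1, ih2⟩⟩, rfl⟩
  | majOk _ ih =>
    simp only [outSet, Finset.mem_image]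
    exact ⟨(_, _), Finset.mem_product.2 ⟨ideal_mem_modesF,
      Fintype.mem_piFinset.2 ih⟩, rfl⟩
  | majFail _ ih =>
    simp only [outSet, Finset.mem_image]
    exact ⟨(_, _), Finset.mem_product.2 ⟨negated_mem_modesF,
      Fintype.mem_piFinset.2 ih⟩, rfl⟩

lemma modeFactor_self {m : Mode} (hm : m ≠ .unreliable) : modeFactor m m = 1 := by
  cases m <;> simp_all [modeFactor]

lemma fin_cast_self {n : ℕ} (h : n = n) (i : Fin n) : Fin.cast h i = i := rfl

lemma prob_self {φ : Form α} (h : φ.IsPL) : φ.prob φ = 1 := by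
  induction φ with
  | verum => simp [Form.prob]
  | falsum => simp [Form.prob]
  | var x => simp [Form.prob]
  | not m φ ih =>
    obtain ⟨hm, hφ⟩ := h
    simp [Form.prob, modeFactor_self hm, ih hφ]
  | bin c m φ ψ ih1 ih2 =>
    obtain ⟨hm, h1, h2⟩ := h
    simp [Form.prob, modeFactor_self hm, ih1 h1, ih2 h2]
  | maj k m f ih =>
    obtain ⟨hm, hf⟩ := h
    simp [Form.prob, modeFactor_self hm, fin_cast_self, fun i => ih i (hf i)]

lemma prob_eq {φ ψ : Form α} (h : Outcome φ ψ) :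
    ∃ a b : ℕ, a + b ≤ ψ.unrelCount ∧
      ψ.prob φ = Polynomial.X ^ a * (1 - Polynomial.X) ^ b := by
  induction h with
  | refl φ hpl => exact ⟨0, 0, by simp, by simp [prob_self hpl]⟩
  | @notC m φ ψ hm _ ih =>
    obtain ⟨a, b, hab, hp⟩ := ih
    exact ⟨a, b, by simp [Form.unrelCount]; omega,
      by simp [Form.prob, modeFactor_self hm, hp]⟩
  | @binC c m φ₁ φ₂ ψ₁ ψ₂ hm _ _ ih1 ih2 =>
    obtain ⟨a1, b1, hab1, hp1⟩ := ih1
    obtain ⟨a2, b2, hab2, hp2⟩ := ih2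
    exact ⟨a1 + a2, b1 + b2, by simp [Form.unrelCount]; omega,
      by simp [Form.prob, modeFactor_self hm, hp1, hp2]; ring⟩
  | @majC k m f g hm _ ih =>
    choose a b hab hp using ih
    refine ⟨∑ i, a i, ∑ i, b i, ?_, ?_⟩
    · have hsum : (∑ i, a i) + ∑ i, b i ≤ ∑ i, (g i).unrelCount := by
        rw [← Finset.sum_add_distrib]; exact Finset.sum_le_sum fun i _ => hab i
      simp [Form.unrelCount]
      omega
    · simp only [Form.prob]
      rw [dif_pos trivial]
      simp only [modeFactor_self hm, one_mul, fin_cast_self]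
      rw [Finset.prod_congr rfl fun i _ => hp i, Finset.prod_mul_distrib,
        Finset.prod_pow_eq_pow_sum, Finset.prod_pow_eq_pow_sum]
  | @notOk φ ψ _ ih =>
    obtain ⟨a, b, hab, hp⟩ := ih
    refine ⟨a + 1, b, by simp [Form.unrelCount]; omega, ?_⟩
    simp [Form.prob, modeFactor, hp]; ring
  | @notFail φ ψ _ ih =>
    obtain ⟨a, b, hab, hp⟩ := ih
    refine ⟨a, b + 1, by simp [Form.unrelCount]; omega, ?_⟩
    simp [Form.prob, modeFactor, hp]; ring
  | @binOk c φ₁ φ₂ ψ₁ ψ₂ _ _ ih1 ih2 =>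
    obtain ⟨a1, b1, hab1, hp1⟩ := ih1
    obtain ⟨a2, b2, hab2, hp2⟩ := ih2
    refine ⟨a1 + a2 + 1, b1 + b2, by simp [Form.unrelCount]; omega, ?_⟩
    simp [Form.prob, modeFactor, hp1, hp2]; ring
  | @binFail c φ₁ φ₂ ψ₁ ψ₂ _ _ ih1 ih2 =>
    obtain ⟨a1, b1, hab1, hp1⟩ := ih1
    obtain ⟨a2, b2, hab2, hp2⟩ := ih2
    refine ⟨a1 + a2, b1 + b2 + 1, by simp [Form.unrelCount]; omega, ?_⟩
    simp [Form.prob, modeFactor, hp1, hp2]; ring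
  | @majOk k f g _ ih =>
    choose a b hab hp using ih
    refine ⟨(∑ i, a i) + 1, ∑ i, b i, ?_, ?_⟩
    · have hsum : (∑ i, a i) + ∑ i, b i ≤ ∑ i, (g i).unrelCount := by
        rw [← Finset.sum_add_distrib]; exact Finset.sum_le_sum fun i _ => hab i
      simp [Form.unrelCount]
      omega
    · simp only [Form.prob]
      rw [dif_pos trivial]
      simp only [fin_cast_self, modeFactor]
      rw [Finset.prod_congr rfl fun i _ => hp i, Finset.prod_mul_distrib,
        Finset.prod_pow_eq_pow_sum, Finset.prod_pow_eq_pow_sum]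
      ring
  | @majFail k f g _ ih =>
    choose a b hab hp using ih
    refine ⟨∑ i, a i, (∑ i, b i) + 1, ?_, ?_⟩
    · have hsum : (∑ i, a i) + ∑ i, b i ≤ ∑ i, (g i).unrelCount := by
        rw [← Finset.sum_add_distrib]; exact Finset.sum_le_sum fun i _ => hab i
      simp [Form.unrelCount]
      omega
    · simp only [Form.prob]
      rw [dif_pos trivial]
      simp only [fin_cast_self, modeFactor]
      rw [Finset.prod_congr rfl fun i _ => hp i, Finset.prod_mul_distrib,
        Finset.prod_pow_eq_pow_sum, Finset.prod_pow_eq_pow_sum]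
      ring

lemma degree_one_sub_X : (1 - Polynomial.X : Polynomial ℝ).degree = 1 := by
  rw [show (1 - Polynomial.X : Polynomial ℝ) = -(Polynomial.X - Polynomial.C 1) by
    simp, Polynomial.degree_neg, Polynomial.degree_X_sub_C]

lemma degree_XaXb (a b : ℕ) :
    (Polynomial.X ^ a * (1 - Polynomial.X) ^ b : Polynomial ℝ).degree = (a + b : ℕ) := by
  rw [Polynomial.degree_mul, Polynomial.degree_X_pow, Polynomial.degree_pow,
    degree_one_sub_X]
  simp [Nat.cast_add]

lemma abs_coeff_one_sub_X_pow (b : ℕ) : ∀ n : ℕ,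
    |(((1 - Polynomial.X : Polynomial ℤ)) ^ b).coeff n| ≤ 2 ^ b := by
  induction b with
  | zero => intro n; simp [Polynomial.coeff_one]; split <;> simp
  | succ b ih =>
    intro n
    have hrw : ((1 - Polynomial.X : Polynomial ℤ)) ^ (b + 1) =
        (1 - Polynomial.X) ^ b - Polynomial.X * (1 - Polynomial.X) ^ b := by ring
    rw [hrw, Polynomial.coeff_sub]
    cases n with
    | zero =>
      rw [Polynomial.mul_coeff_zero]
      simp only [Polynomial.coeff_X_zero, zero_mul, sub_zero]
      calc |((1 - Polynomial.X : Polynomial ℤ)) ^ b |>.coeff 0| ≤ 2 ^ b := ih 0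
        _ ≤ 2 ^ (b + 1) := by
          exact pow_le_pow_right₀ (by norm_num) (Nat.le_succ b)
    | succ n =>
      rw [Polynomial.coeff_X_mul]
      calc |(((1 - Polynomial.X : Polynomial ℤ)) ^ b).coeff (n + 1) -
              (((1 - Polynomial.X : Polynomial ℤ)) ^ b).coeff n|
          ≤ |(((1 - Polynomial.X : Polynomial ℤ)) ^ b).coeff (n + 1)| +
              |(((1 - Polynomial.X : Polynomial ℤ)) ^ b).coeff n| := abs_sub _ _
        _ ≤ 2 ^ b + 2 ^ b := add_le_add (ih (n + 1)) (ih n)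
        _ = 2 ^ (b + 1) := by ring

lemma abs_coeff_XaXb (a b n : ℕ) :
    |((Polynomial.X ^ a * (1 - Polynomial.X) ^ b : Polynomial ℤ)).coeff n| ≤ 2 ^ b := by
  rw [mul_comm, Polynomial.coeff_mul_X_pow']
  split
  · exact abs_coeff_one_sub_X_pow b _
  · simp

lemma XaXb_map (a b : ℕ) :
    (Polynomial.X ^ a * (1 - Polynomial.X) ^ b : Polynomial ℝ) =
      (Polynomial.X ^ a * (1 - Polynomial.X) ^ b : Polynomial ℤ).map
        (Int.castRingHom ℝ) := by
  simp

lemma prob_coeff_int {φ ψ : Form α} (h : Outcome φ ψ) (n : ℕ) :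
    ∃ z : ℤ, (ψ.prob φ).coeff n = (z : ℝ) ∧ |z| ≤ 2 ^ ψ.unrelCount := by
  obtain ⟨a, b, hab, hp⟩ := prob_eq h
  refine ⟨(Polynomial.X ^ a * (1 - Polynomial.X) ^ b : Polynomial ℤ).coeff n, ?_, ?_⟩
  · rw [hp, XaXb_map, Polynomial.coeff_map]; rfl
  · exact le_trans (abs_coeff_XaXb a b n)
      (pow_le_pow_right₀ (by norm_num) (by omega))

lemma prob_degree {φ ψ : Form α} (h : Outcome φ ψ) :
    (ψ.prob φ).degree ≤ (ψ.unrelCount : ℕ) := by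
  obtain ⟨a, b, hab, hp⟩ := prob_eq h
  rw [hp, degree_XaXb]
  exact_mod_cast Nat.cast_le.mpr hab

end UCLAux

open UCL in
/-- For every c-formula `ψ` with exactly `m` occurrences of unreliable
connectives and every valuation `v`, the polynomial `P^v_ψ ∈ ℝ[ν]` has degree
at most `m` and all its coefficients are integers of absolute value at most
`4^m`. -/
theorem stmt8 {X : Type} [DecidableEq X] (ψ : Form X) (m : ℕ)
    (hm : ψ.unrelCount = m) (v : X → Bool) :
    (Ppoly v ψ).degree ≤ (m : ℕ) ∧
      ∀ n : ℕ, ∃ z : ℤ, (Ppoly v ψ).coeff n = (z : ℝ) ∧ |z| ≤ 4 ^ m := by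
  classical
  subst hm
  have hsub : {φ : Form X | Outcome φ ψ ∧ φ.eval v = true} ⊆ ↑(UCLAux.outSet ψ) :=
    fun φ hφ => UCLAux.mem_outSet_of_outcome hφ.1
  have hS : {φ : Form X | Outcome φ ψ ∧ φ.eval v = true}.Finite :=
    Set.Finite.subset (UCLAux.outSet ψ).finite_toSet hsub
  have hP : Ppoly v ψ = ∑ φ ∈ hS.toFinset, ψ.prob φ := by
    rw [Ppoly]; exact finsum_mem_eq_finite_toFinset_sum _ hS
  have hmem : ∀ φ ∈ hS.toFinset, Outcome φ ψ := by
    intro φ h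
    rw [Set.Finite.mem_toFinset] at h
    exact h.1
  have hcard : hS.toFinset.card ≤ 2 ^ ψ.unrelCount := by
    refine le_trans (Finset.card_le_card ?_) (UCLAux.card_outSet ψ)
    intro φ h
    exact hsub (hS.mem_toFinset.mp h)
  constructor
  · rw [hP]
    refine le_trans (Polynomial.degree_sum_le _ _) (Finset.sup_le fun φ h => ?_)
    exact UCLAux.prob_degree (hmem φ h)
  · intro n
    set f : Form X → ℤ := fun φ =>
      if h : Outcome φ ψ then Classical.choose (UCLAux.prob_coeff_int h n) else 0
      with hfdef
    have hf : ∀ φ ∈ hS.toFinset,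
        (ψ.prob φ).coeff n = (f φ : ℝ) ∧ |f φ| ≤ 2 ^ ψ.unrelCount := by
      intro φ h
      have ho := hmem φ h
      simp only [hfdef, dif_pos ho]
      exact Classical.choose_spec (UCLAux.prob_coeff_int ho n)
    refine ⟨∑ φ ∈ hS.toFinset, f φ, ?_, ?_⟩
    · rw [hP, Polynomial.finset_sum_coeff]
      push_cast
      exact Finset.sum_congr rfl fun φ h => (hf φ h).1
    · calc |∑ φ ∈ hS.toFinset, f φ| ≤ ∑ φ ∈ hS.toFinset, |f φ| :=
            Finset.abs_sum_le_sum_abs _ _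
        _ ≤ ∑ _φ ∈ hS.toFinset, (2 : ℤ) ^ ψ.unrelCount :=
            Finset.sum_le_sum fun φ h => (hf φ h).2
        _ = hS.toFinset.card * 2 ^ ψ.unrelCount := by
            rw [Finset.sum_const, nsmul_eq_mul]
        _ ≤ (2 ^ ψ.unrelCount : ℕ) * 2 ^ ψ.unrelCount := by
            have : (hS.toFinset.card : ℤ) ≤ ((2 ^ ψ.unrelCount : ℕ) : ℤ) := by
              exact_mod_cast hcard
            exact mul_le_mul_of_nonneg_right this (by positivity)
        _ = 4 ^ ψ.unrelCount := by push_cast; rw [← mul_pow]; norm_num
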